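/- Suppose g : ℕ × ℕ → ℤ satisfies: g(n,0) = n for all n ≥ 1; g(n,1) = n(n−1)(2^{n−2}+1) for all n ≥ 2; g(n,2) = (4^n−4)/3 − 2^n(n−1) + n(n−1)(n−2)/2 for all n ≥ 3; g(n,n−1) = n+4 for all n ≥ 4; and g(n,k) = g(n−1,k) + g(n−1,k−1) + C(n−1,k) for all n ≥ 5 and 3 ≤ k ≤ n−2, where C(n−1,k) is the binomial coefficient. Then for every n ≥ 1, the sum ∑_{k=0}^{n−1} g(n,k) equals 2^{n−1}(2^n − 1). -/

import Mathlib

lemma tgc_sum_split3 (f : ℕ → ℤ) {n : ℕ} (hn : 3 ≤ n) :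
    ∑ k ∈ Finset.range n, f k = f 0 + f 1 + f 2 + ∑ k ∈ Finset.Ico 3 n, f k := by
  rw [Finset.range_eq_Ico, ← Finset.sum_Ico_consecutive f (Nat.zero_le 3) hn]
  rw [show Finset.Ico 0 3 = Finset.range 3 from (Finset.range_eq_Ico 3).symm]
  rw [Finset.sum_range_succ, Finset.sum_range_succ, Finset.sum_range_one]

lemma tgc_sum_shift (f : ℕ → ℤ) (n : ℕ) :
    ∑ k ∈ Finset.Ico 3 n, f (k-1) = ∑ k ∈ Finset.Ico 2 (n-1), f k := by
  rw [Finset.sum_Ico_eq_sum_range, Finset.sum_Ico_eq_sum_range]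
  rw [show n - 1 - 2 = n - 3 from by omega]
  exact Finset.sum_congr rfl fun i _ => by congr 1; omega

lemma tgc_choose2 (m : ℕ) : 2 * m.choose 2 = m * (m-1) := by
  induction m with
  | zero => rfl
  | succ k ih =>
    rw [Nat.choose_succ_succ, Nat.choose_one_right, Nat.mul_add, ih]
    cases k with
    | zero => rfl
    | succ j => simp [Nat.succ_sub_one]; ring

/-- The gate counts `g n k` of the recurrence decomposition scheme sum, over
`k = 0, …, n-1`, to the total number `2^{n-1}(2^n - 1) = N(N-1)/2` of gates. -/
theorem total_gate_count (g : ℕ → ℕ → ℤ)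
    (hg0 : ∀ n : ℕ, 1 ≤ n → g n 0 = n)
    (hg1 : ∀ n : ℕ, 2 ≤ n →
      g n 1 = (n : ℤ) * ((n : ℤ) - 1) * (2 ^ (n - 2) + 1))
    (hg2 : ∀ n : ℕ, 3 ≤ n →
      g n 2 = ((4 : ℤ) ^ n - 4) / 3 - 2 ^ n * ((n : ℤ) - 1) +
        (n : ℤ) * ((n : ℤ) - 1) * ((n : ℤ) - 2) / 2)
    (hgtop : ∀ n : ℕ, 4 ≤ n → g n (n - 1) = (n : ℤ) + 4)
    (hgrec : ∀ n k : ℕ, 5 ≤ n → 3 ≤ k → k ≤ n - 2 →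
      g n k = g (n - 1) k + g (n - 1) (k - 1) + ((n - 1).choose k : ℤ)) :
    ∀ n : ℕ, 1 ≤ n →
      ∑ k ∈ Finset.range n, g n k = 2 ^ (n - 1) * (2 ^ n - 1) := by
  have key : ∀ n : ℕ, 4 ≤ n →
      ∑ k ∈ Finset.range n, g n k = 2 ^ (n - 1) * (2 ^ n - 1) := by
    intro n hn
    induction n, hn using Nat.le_induction with
    | base =>
      rw [Finset.sum_range_succ, Finset.sum_range_succ, Finset.sum_range_succ,
        Finset.sum_range_one, hg0 4 (by norm_num), hg1 4 (by norm_num),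
        hg2 4 (by norm_num), show g 4 3 = (4:ℤ) + 4 from hgtop 4 (by norm_num)]
      norm_num
    | succ n hn ih =>
      obtain ⟨m, rfl⟩ : ∃ m, n = m + 4 := ⟨n - 4, by omega⟩
      set n : ℕ := m + 4 with hn4
      -- divisibility facts
      have hd1 : (3:ℤ) ∣ 4 ^ n - 1 := by
        simpa using sub_dvd_pow_sub_pow (4:ℤ) 1 n
      have hd3 : (3:ℤ) ∣ 4 ^ n - 4 := by
        have h := hd1.sub (dvd_refl 3)
        rwa [show (4:ℤ)^n - 1 - 3 = 4^n - 4 from by ring] at h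
      have hd1' : (3:ℤ) ∣ 4 ^ (n+1) - 1 := by
        simpa using sub_dvd_pow_sub_pow (4:ℤ) 1 (n+1)
      have hd3' : (3:ℤ) ∣ 4 ^ (n+1) - 4 := by
        have h := hd1'.sub (dvd_refl 3)
        rwa [show (4:ℤ)^(n+1) - 1 - 3 = 4^(n+1) - 4 from by ring] at h
      have he : (2:ℤ) ∣ (n:ℤ) * ((n:ℤ)-1) * ((n:ℤ)-2) := by
        rcases Int.even_or_odd (n:ℤ) with h | h
        · exact Dvd.dvd.mul_right (Dvd.dvd.mul_right h.two_dvd _) _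
        · have : Even ((n:ℤ) - 1) := by
            rcases h with ⟨k, hk⟩; exact ⟨k, by omega⟩
          exact Dvd.dvd.mul_right (Dvd.dvd.mul_left this.two_dvd _) _
      have he' : (2:ℤ) ∣ (((n:ℕ)+1 : ℕ):ℤ) * ((((n:ℕ)+1:ℕ):ℤ)-1) * ((((n:ℕ)+1:ℕ):ℤ)-2) := by
        rcases Int.even_or_odd (n:ℤ) with h | h
        · have : Even ((((n:ℕ)+1:ℕ):ℤ)-1) := by
            rcases h with ⟨k, hk⟩; exact ⟨k, by push_cast; omega⟩
          exact Dvd.dvd.mul_right (Dvd.dvd.mul_left this.two_dvd _) _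
        · have : Even (((n:ℕ)+1 : ℕ):ℤ) := by
            rcases h with ⟨k, hk⟩; exact ⟨k+1, by push_cast; omega⟩
          exact Dvd.dvd.mul_right (Dvd.dvd.mul_right this.two_dvd _) _
      set a : ℤ := ((4:ℤ) ^ n - 4) / 3 with ha
      have ha3 : 3 * a = 4 ^ n - 4 := Int.mul_ediv_cancel' hd3
      set a' : ℤ := ((4:ℤ) ^ (n+1) - 4) / 3 with ha'
      have ha3' : 3 * a' = 4 ^ (n+1) - 4 := Int.mul_ediv_cancel' hd3'
      set b : ℤ := (n:ℤ) * ((n:ℤ)-1) * ((n:ℤ)-2) / 2 with hb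
      have hb2 : 2 * b = (n:ℤ) * ((n:ℤ)-1) * ((n:ℤ)-2) := Int.mul_ediv_cancel' he
      set b' : ℤ := (((n:ℕ)+1 : ℕ):ℤ) * ((((n:ℕ)+1:ℕ):ℤ)-1) * ((((n:ℕ)+1:ℕ):ℤ)-2) / 2 with hb'
      have hb2' : 2 * b' = (((n:ℕ)+1 : ℕ):ℤ) * ((((n:ℕ)+1:ℕ):ℤ)-1) * ((((n:ℕ)+1:ℕ):ℤ)-2) :=
        Int.mul_ediv_cancel' he'
      -- choose fact
      have hc2 : ((n.choose 2 : ℕ) : ℤ) * 2 = (n:ℤ) * ((n:ℤ) - 1) := by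
        have h := tgc_choose2 (m+4)
        rw [show m+4-1 = m+3 from rfl] at h
        have hZ : (2:ℤ) * (((m+4).choose 2 : ℕ) : ℤ) = ((m:ℤ)+4) * ((m:ℤ)+3) := by
          exact_mod_cast h
        rw [hn4]; push_cast at hZ ⊢; linear_combination hZ
      have hchoosesum : ∑ k ∈ Finset.Ico 3 n, ((n.choose k : ℕ) : ℤ)
          = 2 ^ n - 2 - (n:ℤ) - ((n.choose 2 : ℕ) : ℤ) := by
        have h1 : (∑ k ∈ Finset.range (n+1), ((n.choose k : ℕ) : ℤ)) = 2 ^ n := by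
          exact_mod_cast Nat.sum_range_choose n
        rw [Finset.sum_range_succ] at h1
        rw [tgc_sum_split3 (fun k => ((n.choose k : ℕ) : ℤ)) (by omega)] at h1
        simp only [Nat.choose_zero_right, Nat.choose_one_right, Nat.choose_self] at h1
        push_cast at h1 ⊢
        linarith
      -- unfold the sum at n+1
      have hsplit : ∑ k ∈ Finset.range (n+1), g (n+1) k
          = g (n+1) 0 + g (n+1) 1 + g (n+1) 2
            + (∑ k ∈ Finset.Ico 3 n, g (n+1) k) + g (n+1) n := by
        rw [tgc_sum_split3 (g (n+1)) (by omega),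
          Finset.sum_Ico_succ_top (by omega : 3 ≤ n)]
        ring
      have hrec : ∑ k ∈ Finset.Ico 3 n, g (n+1) k
          = (∑ k ∈ Finset.Ico 3 n, g n k) + (∑ k ∈ Finset.Ico 3 n, g n (k-1))
            + ∑ k ∈ Finset.Ico 3 n, ((n.choose k : ℕ) : ℤ) := by
        rw [← Finset.sum_add_distrib, ← Finset.sum_add_distrib]
        refine Finset.sum_congr rfl fun k hk => ?_
        rw [Finset.mem_Ico] at hk
        have := hgrec (n+1) k (by omega) hk.1 (by omega)
        simpa using this
      have hA : ∑ k ∈ Finset.Ico 3 n, g n k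
          = (∑ k ∈ Finset.range n, g n k) - g n 0 - g n 1 - g n 2 := by
        rw [tgc_sum_split3 (g n) (by omega)]; ring
      have hB : ∑ k ∈ Finset.Ico 3 n, g n (k-1)
          = (∑ k ∈ Finset.range n, g n k) - g n 0 - g n 1 - g n (n-1) := by
        rw [tgc_sum_shift (g n) n]
        have h1 : ∑ k ∈ Finset.Ico 2 (n-1), g n k
            = (∑ k ∈ Finset.Ico 2 n, g n k) - g n (n-1) := by
          have heq : Finset.Ico 2 n = Finset.Ico 2 ((n-1)+1) := by
            have h : n - 1 + 1 = n := by omega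
            rw [h]
          rw [heq, Finset.sum_Ico_succ_top (by omega : 2 ≤ n - 1)]
          ring
        have h2 : ∑ k ∈ Finset.Ico 2 n, g n k
            = (∑ k ∈ Finset.range n, g n k) - g n 0 - g n 1 := by
          rw [tgc_sum_split3 (g n) (by omega),
            ← Finset.sum_Ico_consecutive (g n) (by omega : 2 ≤ 3) (by omega : 3 ≤ n)]
          rw [show Finset.Ico 2 3 = {2} from rfl, Finset.sum_singleton]
          ring
        rw [h1, h2]
      -- now substitute all explicit values
      rw [hsplit, hrec, hA, hB, hchoosesum, ih,
        hg0 n (by omega), hg0 (n+1) (by omega),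
        hg1 n (by omega), hg1 (n+1) (by omega),
        hg2 n (by omega), hg2 (n+1) (by omega),
        show g n (n-1) = (n:ℤ) + 4 from hgtop n (by omega),
        show g (n+1) n = ((n+1:ℕ):ℤ) + 4 by
          have := hgtop (n+1) (by omega); simpa using this]
      rw [show (n+1) - 2 = n - 1 from by omega, show (n+1) - 1 = n from by omega,
        show n - 2 = m + 2 from by omega, show n - 1 = m + 3 from by omega,
        ← ha, ← ha', ← hb, ← hb']
      -- power normalisation
      have h2m : (4:ℤ)^m = 2^m * 2^m := by
        rw [show (4:ℤ) = 2*2 from by norm_num, mul_pow]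
      have hA4 : (4:ℤ)^n = 256 * (2^m * 2^m) := by
        rw [hn4, show (4:ℤ)^(m+4) = 4^m * 256 from by ring, h2m]; ring
      have hA4' : (4:ℤ)^(n+1) = 1024 * (2^m * 2^m) := by
        rw [hn4, show (4:ℤ)^(m+4+1) = 4^m * 1024 from by ring, h2m]; ring
      rw [hA4] at ha3; rw [hA4'] at ha3'
      rw [show (2:ℤ)^(m+2) = 4 * 2^m from by ring,
        show (2:ℤ)^(m+3) = 8 * 2^m from by ring,
        show (2:ℤ)^n = 16 * 2^m from by rw [hn4]; ring,
        show (2:ℤ)^(n+1) = 32 * 2^m from by rw [hn4]; ring]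
      -- eliminate the quotients
      have h3 : 3 * (a' - a - 256 * (2^m * 2^m)) = 0 := by linear_combination ha3' - ha3
      have haa : a' = a + 256 * (2^m * 2^m) := by
        have := (mul_eq_zero.mp h3).resolve_left (by norm_num)
        linarith
      have hb2'' : 2 * b' = ((n:ℤ)+1) * (n:ℤ) * ((n:ℤ)-1) := by
        rw [hb2']; push_cast; ring
      have h2 : 2 * (b' - b - 3 * ((n.choose 2 : ℕ) : ℤ)) = 0 := by
        linear_combination hb2'' - hb2 - 3 * hc2
      have hbb : b' = b + 3 * ((n.choose 2 : ℕ) : ℤ) := by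
        have := (mul_eq_zero.mp h2).resolve_left (by norm_num)
        linarith
      have hnc : (n:ℤ) = (m:ℤ) + 4 := by rw [hn4]; push_cast; ring
      push_cast
      linear_combination haa + hbb + hc2
  intro n hn
  by_cases h4 : 4 ≤ n
  · exact key n h4
  · interval_cases n
    · rw [Finset.sum_range_one, hg0 1 le_rfl]; norm_num
    · rw [Finset.sum_range_succ, Finset.sum_range_one, hg0 2 (by norm_num),
        hg1 2 le_rfl]; norm_num
    · rw [Finset.sum_range_succ, Finset.sum_range_succ, Finset.sum_range_one,
        hg0 3 (by norm_num), hg1 3 (by norm_num), hg2 3 le_rfl]; norm_num
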